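/- Let t ≥ 2 be an integer and let H be a connected graph with more than t vertices. For every real ε > 0 there exists r₀ such that for all integers r ≥ r₀ one has f(r, H) ≤ (1 + ε) · (r − 1)/(t − 1). -/

import Mathlib

open SimpleGraph

/-- `G` is an `(r,k)`-graph: its vertex set can be partitioned into `r` parts,
each of size at most `k`, with at least one edge between any two distinct parts. -/
def IsRKGraph {V : Type} [Fintype V] (G : SimpleGraph V) (r k : ℕ) : Prop :=
  ∃ P : Fin r → Finset V,
    (∀ v : V, ∃! i, v ∈ P i) ∧
    (∀ i, (P i).card ≤ k) ∧
    ∀ i j : Fin r, i ≠ j → ∃ u ∈ P i, ∃ w ∈ P j, G.Adj u w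

/-- `G` contains a subgraph isomorphic to `H`. -/
def ContainsSub {W V : Type} (H : SimpleGraph W) (G : SimpleGraph V) : Prop :=
  ∃ f : H →g G, Function.Injective f

/-- `f(r,H)`: the minimum `k` for which there exists an `H`-free `(r,k)`-graph. -/
noncomputable def fGraph {W : Type} (H : SimpleGraph W) (r : ℕ) : ℕ :=
  sInf {k | ∃ (n : ℕ) (G : SimpleGraph (Fin n)), ¬ ContainsSub H G ∧ IsRKGraph G r k}

/-- A covering design on `Fin r`: a multiset of blocks of size at most `t` covering all
pairs, with each point in at most `k` blocks. -/
def Cov (t r k : ℕ) : Prop :=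
  ∃ D : Multiset (Finset (Fin r)),
    (∀ B ∈ D, B.card ≤ t) ∧
    (∀ x y : Fin r, x ≠ y → ∃ B ∈ D, x ∈ B ∧ y ∈ B) ∧
    (∀ x : Fin r, (D.countP fun B => x ∈ B) ≤ k)

lemma cov_base {t : ℕ} (ht : 2 ≤ t) (r : ℕ) : Cov t r (2 * r) := by
  refine ⟨Multiset.map (fun p : Fin r × Fin r => ({p.1, p.2} : Finset (Fin r)))
    (Finset.univ : Finset (Fin r × Fin r)).val, ?_, ?_, ?_⟩
  · intro B hB
    obtain ⟨p, _, rfl⟩ := Multiset.mem_map.mp hB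
    exact le_trans (le_trans (Finset.card_insert_le _ _)
      (by simp)) ht
  · intro x y hxy
    exact ⟨{x, y}, Multiset.mem_map.mpr ⟨(x, y), by simp, rfl⟩, by simp, by simp⟩
  · intro x
    rw [Multiset.countP_map]
    have : (Multiset.filter (fun p : Fin r × Fin r => x ∈ ({p.1, p.2} : Finset (Fin r)))
        (Finset.univ : Finset (Fin r × Fin r)).val) =
        (Finset.filter (fun p : Fin r × Fin r => x ∈ ({p.1, p.2} : Finset (Fin r))) Finset.univ).val := by
      rw [Finset.filter_val]
    rw [this]
    have h2 : (Finset.filter (fun p : Fin r × Fin r => x ∈ ({p.1, p.2} : Finset (Fin r)))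
        Finset.univ).card ≤ 2 * r := by
      have hsub : (Finset.filter (fun p : Fin r × Fin r => x ∈ ({p.1, p.2} : Finset (Fin r)))
          Finset.univ) ⊆ (Finset.filter (fun p : Fin r × Fin r => p.1 = x) Finset.univ)
          ∪ (Finset.filter (fun p : Fin r × Fin r => p.2 = x) Finset.univ) := by
        intro p hp
        simp only [Finset.mem_filter, Finset.mem_insert, Finset.mem_singleton] at hp
        simp only [Finset.mem_union, Finset.mem_filter, Finset.mem_univ, true_and]
        rcases hp.2 with h | h
        · exact Or.inl h.symm
        · exact Or.inr h.symm
      refine le_trans (Finset.card_le_card hsub) (le_trans (Finset.card_union_le _ _) ?_)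
      have hc1 : (Finset.filter (fun p : Fin r × Fin r => p.1 = x) Finset.univ).card ≤ r := by
        refine le_trans (Finset.card_le_card_of_injOn (fun p => p.2)
          (fun a _ => Finset.mem_univ _) ?_) (by simp)
        intro a ha b hb hab
        simp only [Finset.coe_filter, Set.mem_setOf_eq] at ha hb
        exact Prod.ext (ha.2.trans hb.2.symm) hab
      have hc2 : (Finset.filter (fun p : Fin r × Fin r => p.2 = x) Finset.univ).card ≤ r := by
        refine le_trans (Finset.card_le_card_of_injOn (fun p => p.1)
          (fun a _ => Finset.mem_univ _) ?_) (by simp)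
        intro a ha b hb hab
        simp only [Finset.coe_filter, Set.mem_setOf_eq] at ha hb
        exact Prod.ext hab (ha.2.trans hb.2.symm)
      omega
    exact h2

lemma cov_restrict {t r r' k : ℕ} (hrr : r ≤ r') (h : Cov t r' k) : Cov t r k := by
  obtain ⟨D, hsize, hcov, hrep⟩ := h
  classical
  let emb : Fin r → Fin r' := Fin.castLE hrr
  have hembinj : Function.Injective emb := Fin.castLE_injective hrr
  let res : Finset (Fin r') → Finset (Fin r) := fun B => Finset.univ.filter (fun x => emb x ∈ B)
  have hmem : ∀ (B : Finset (Fin r')) (x : Fin r), x ∈ res B ↔ emb x ∈ B := by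
    intro B x; simp [res]
  refine ⟨D.map res, ?_, ?_, ?_⟩
  · intro B hB
    obtain ⟨B', hB', rfl⟩ := Multiset.mem_map.mp hB
    refine le_trans (Finset.card_le_card_of_injOn emb ?_ ?_) (hsize B' hB')
    · intro a ha; exact (hmem B' a).mp ha
    · intro a _ b _ hab; exact hembinj hab
  · intro x y hxy
    obtain ⟨B, hB, hx, hy⟩ := hcov (emb x) (emb y) (fun hc => hxy (hembinj hc))
    exact ⟨res B, Multiset.mem_map.mpr ⟨B, hB, rfl⟩, (hmem B x).mpr hx, (hmem B y).mpr hy⟩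
  · intro x
    rw [Multiset.countP_map]
    calc (Multiset.filter (fun B => x ∈ res B) D).card
        = Multiset.countP (fun B => emb x ∈ B) D := by
          rw [Multiset.countP_eq_card_filter]
          congr 1
          apply Multiset.filter_congr
          intro B _; simp [hmem]
      _ ≤ k := hrep (emb x)

lemma cov_step {t n k : ℕ} (hn : 0 < n)
    (hcop : ∀ m, 0 < m → m < t → Nat.Coprime m n)
    (h : Cov t n k) : Cov t (t * n) (n + k) := by
  classical
  obtain ⟨D, hsize, hcov, hrep⟩ := h
  haveI : NeZero n := ⟨hn.ne'⟩
  let e : Fin t × Fin n ≃ Fin (t * n) := finProdFinEquiv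
  let zf : ZMod n → Fin n := fun z => ⟨z.val, ZMod.val_lt z⟩
  have zf_eq : ∀ (z : ZMod n) (c : Fin n), zf z = c ↔ z = ((c : ℕ) : ZMod n) := by
    intro z c
    constructor
    · intro hz
      have : z.val = (c : ℕ) := congrArg Fin.val hz
      rw [← this, ZMod.natCast_val, ZMod.cast_id]
    · intro hz
      apply Fin.ext
      simp only [zf, hz, ZMod.val_cast_of_lt c.isLt]
  -- cross blocks
  let blk : ZMod n × ZMod n → Finset (Fin (t * n)) := fun ab =>
    (Finset.univ : Finset (Fin t)).image fun i => e (i, zf (ab.1 + ab.2 * ((i : ℕ) : ZMod n)))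
  let Dcross : Multiset (Finset (Fin (t * n))) :=
    Multiset.map blk (Finset.univ : Finset (ZMod n × ZMod n)).val
  -- column blocks
  let colEmb : Fin t → (Fin n ↪ Fin (t * n)) := fun i =>
    ⟨fun c => e (i, c), fun a b hab => by
      have := e.injective hab
      exact (Prod.mk.injEq _ _ _ _).mp this |>.2⟩
  let Dcols : Multiset (Finset (Fin (t * n))) :=
    ∑ i : Fin t, D.map (fun B => B.map (colEmb i))
  have mem_colblk : ∀ (i i' : Fin t) (c : Fin n) (B : Finset (Fin n)),
      e (i, c) ∈ B.map (colEmb i') ↔ i = i' ∧ c ∈ B := by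
    intro i i' c B
    simp only [Finset.mem_map, colEmb, Function.Embedding.coeFn_mk]
    constructor
    · rintro ⟨c', hc', hec⟩
      have := e.injective hec
      obtain ⟨h1, h2⟩ := Prod.mk.injEq _ _ _ _ |>.mp this
      exact ⟨h1.symm, by rwa [← h2]⟩
    · rintro ⟨rfl, hc⟩
      exact ⟨c, hc, rfl⟩
  have mem_blk : ∀ (i : Fin t) (c : Fin n) (a b : ZMod n),
      e (i, c) ∈ blk (a, b) ↔ a + b * ((i : ℕ) : ZMod n) = ((c : ℕ) : ZMod n) := by
    intro i c a b
    simp only [blk, Finset.mem_image, Finset.mem_univ, true_and]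
    constructor
    · rintro ⟨i', hei⟩
      have := e.injective hei
      obtain ⟨h1, h2⟩ := Prod.mk.injEq _ _ _ _ |>.mp this
      subst h1
      exact (zf_eq _ _).mp h2
    · intro hab
      exact ⟨i, by rw [(zf_eq _ _).mpr hab]⟩
  refine ⟨Dcross + Dcols, ?_, ?_, ?_⟩
  · intro B hB
    rcases Multiset.mem_add.mp hB with hB | hB
    · obtain ⟨ab, _, rfl⟩ := Multiset.mem_map.mp hB
      exact le_trans (Finset.card_image_le) (by simp)
    · obtain ⟨i, _, hB2⟩ := Multiset.mem_sum.mp hB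
      obtain ⟨B', hB', rfl⟩ := Multiset.mem_map.mp hB2
      rw [Finset.card_map]
      exact hsize B' hB'
  · intro x y hxy
    obtain ⟨⟨i, c⟩, hx⟩ : ∃ p, e p = x := ⟨e.symm x, e.apply_symm_apply x⟩
    obtain ⟨⟨i', c'⟩, hy⟩ : ∃ p, e p = y := ⟨e.symm y, e.apply_symm_apply y⟩
    by_cases hii : i = i'
    · subst hii
      have hcc : c ≠ c' := by
        rintro rfl; exact hxy (hx ▸ hy ▸ rfl)
      obtain ⟨B, hB, hc, hc'⟩ := hcov c c' hcc
      refine ⟨B.map (colEmb i), Multiset.mem_add.mpr (Or.inr ?_), ?_, ?_⟩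
      · exact Multiset.mem_sum.mpr ⟨i, by simp, Multiset.mem_map.mpr ⟨B, hB, rfl⟩⟩
      · rw [← hx]; exact (mem_colblk i i c B).mpr ⟨rfl, hc⟩
      · rw [← hy]; exact (mem_colblk i i c' B).mpr ⟨rfl, hc'⟩
    · -- cross pair
      have hunit : IsUnit (((i' : ℕ) : ZMod n) - ((i : ℕ) : ZMod n)) := by
        rcases lt_or_gt_of_ne (fun hc : (i : ℕ) = (i' : ℕ) => hii (Fin.ext hc)) with hlt | hgt
        · have hd : ((i' : ℕ) : ZMod n) - ((i : ℕ) : ZMod n) = (((i' : ℕ) - (i : ℕ) : ℕ) : ZMod n) := by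
            rw [Nat.cast_sub (le_of_lt hlt)]
          rw [hd]
          have h1 := (ZMod.unitOfCoprime _ (hcop ((i' : ℕ) - (i : ℕ)) (by omega) (by omega))).isUnit
          rwa [ZMod.coe_unitOfCoprime] at h1
        · have hd : ((i' : ℕ) : ZMod n) - ((i : ℕ) : ZMod n) = -((((i : ℕ) - (i' : ℕ) : ℕ) : ZMod n)) := by
            rw [Nat.cast_sub (le_of_lt hgt)]; ring
          rw [hd]
          refine IsUnit.neg ?_
          have h1 := (ZMod.unitOfCoprime _ (hcop ((i : ℕ) - (i' : ℕ)) (by omega) (by omega))).isUnit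
          rwa [ZMod.coe_unitOfCoprime] at h1
      set cb := ((c : ℕ) : ZMod n) with hcb
      set cb' := ((c' : ℕ) : ZMod n) with hcb'
      let u := hunit.unit
      let b : ZMod n := (cb' - cb) * ↑u⁻¹
      let a : ZMod n := cb - b * ((i : ℕ) : ZMod n)
      refine ⟨blk (a, b), Multiset.mem_add.mpr (Or.inl (Multiset.mem_map.mpr ⟨(a, b), by simp, rfl⟩)), ?_, ?_⟩
      · rw [← hx]
        rw [mem_blk]
        simp only [a]
        ring
      · rw [← hy]
        rw [mem_blk]
        have hu : (u : ZMod n) = ((i' : ℕ) : ZMod n) - ((i : ℕ) : ZMod n) := hunit.unit_spec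
        have : a + b * ((i' : ℕ) : ZMod n) = cb + b * (((i' : ℕ) : ZMod n) - ((i : ℕ) : ZMod n)) := by
          simp only [a]; ring
        rw [this, ← hu]
        have : b * (u : ZMod n) = cb' - cb := by
          simp only [b]
          rw [mul_assoc, Units.inv_mul, mul_one]
        rw [this]; ring
  · intro x
    rw [Multiset.countP_add]
    obtain ⟨⟨i, c⟩, hx⟩ : ∃ p, e p = x := ⟨e.symm x, e.apply_symm_apply x⟩
    have hcross : (Dcross.countP fun B => x ∈ B) ≤ n := by
      rw [Multiset.countP_map]
      have heq : (Multiset.filter (fun ab : ZMod n × ZMod n => x ∈ blk ab)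
          (Finset.univ : Finset (ZMod n × ZMod n)).val) =
          (Finset.filter (fun ab : ZMod n × ZMod n => x ∈ blk ab) Finset.univ).val := by
        rw [Finset.filter_val]
      rw [heq]
      have himg : (Finset.filter (fun ab : ZMod n × ZMod n => x ∈ blk ab) Finset.univ) =
          (Finset.univ : Finset (ZMod n)).image
            (fun b => (((c : ℕ) : ZMod n) - b * ((i : ℕ) : ZMod n), b)) := by
        ext ⟨a, b⟩
        simp only [Finset.mem_filter, Finset.mem_univ, true_and, Finset.mem_image]
        rw [← hx, mem_blk]
        constructor
        · intro hab
          exact ⟨b, by rw [← hab]; ring_nf⟩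
        · rintro ⟨b', hb'⟩
          obtain ⟨h1, h2⟩ := Prod.mk.injEq _ _ _ _ |>.mp hb'
          subst h2
          rw [← h1]; ring
      have : (Finset.filter (fun ab : ZMod n × ZMod n => x ∈ blk ab) Finset.univ).card = n := by
        rw [himg, Finset.card_image_of_injective _ (fun b b' hbb => by
          exact (Prod.mk.injEq _ _ _ _ |>.mp hbb).2)]
        simp [ZMod.card]
      rw [← Finset.card_def, this]
    have hcol : (Dcols.countP fun B => x ∈ B) ≤ k := by
      have hsum : (Dcols.countP fun B => x ∈ B) =
          ∑ i' : Fin t, ((D.map (fun B => B.map (colEmb i'))).countP fun B => x ∈ B) :=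
        map_sum (Multiset.countPAddMonoidHom fun B => x ∈ B) _ _
      rw [hsum]
      have : ∀ i' : Fin t, ((D.map (fun B => B.map (colEmb i'))).countP fun B => x ∈ B)
          = if i' = i then D.countP (fun B => c ∈ B) else 0 := by
        intro i'
        rw [Multiset.countP_map]
        split_ifs with hi
        · subst hi
          rw [Multiset.countP_eq_card_filter]
          congr 1
          apply Multiset.filter_congr
          intro B _
          rw [← hx, mem_colblk]
          simp
        · rw [Multiset.card_eq_zero, Multiset.filter_eq_nil]
          intro B _
          rw [← hx, mem_colblk]
          rintro ⟨rfl, -⟩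
          exact hi rfl
      calc ∑ i' : Fin t, ((D.map (fun B => B.map (colEmb i'))).countP fun B => x ∈ B)
          = ∑ i' : Fin t, if i' = i then D.countP (fun B => c ∈ B) else 0 := by
            apply Finset.sum_congr rfl; intro i' _; exact this i'
        _ = D.countP (fun B => c ∈ B) := by rw [Finset.sum_ite_eq' Finset.univ i]; simp
        _ ≤ k := hrep c
    omega

lemma cov_chain {t : ℕ} (ht : 2 ≤ t) (L : ℕ) :
    ∃ b : ℝ, 0 ≤ b ∧ ∀ r : ℕ, ∃ k : ℕ, Cov t r k ∧
      (k : ℝ) ≤ (1 / ((t : ℝ) - 1) + 2 / (t : ℝ) ^ L) * r + b := by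
  have htR : (2 : ℝ) ≤ (t : ℝ) := by exact_mod_cast ht
  have ht1 : (0 : ℝ) < (t : ℝ) - 1 := by linarith
  have ht0 : (0 : ℝ) < (t : ℝ) := by linarith
  induction L with
  | zero =>
    refine ⟨0, le_refl _, fun r => ⟨2 * r, cov_base ht r, ?_⟩⟩
    have h1 : (0 : ℝ) ≤ 1 / ((t : ℝ) - 1) := by positivity
    have h2 : (0 : ℝ) ≤ (r : ℝ) := Nat.cast_nonneg r
    simp only [pow_zero]
    push_cast
    nlinarith [mul_nonneg h1 h2]
  | succ L ih =>
    obtain ⟨b, hb, ihb⟩ := ih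
    set M := (t - 1).factorial with hM
    have hM1 : 1 ≤ M := Nat.one_le_iff_ne_zero.mpr (Nat.factorial_ne_zero _)
    set aL : ℝ := 1 / ((t : ℝ) - 1) + 2 / (t : ℝ) ^ L with haL
    have haL0 : 0 ≤ aL := by positivity
    refine ⟨(1 + aL) * ((M : ℝ) + 2) + b, by positivity, fun r => ?_⟩
    -- choose n
    set q := r / t + 1 with hq
    set n := M * (q / M) + M + 1 with hn
    have hnq : q ≤ n := by
      have := Nat.div_add_mod q M
      have hlt : q % M < M := Nat.mod_lt _ (by omega)
      omega
    have hnq2 : n ≤ q + M + 1 := by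
      have := Nat.div_mul_le_self q M
      have := Nat.mul_div_le q M
      omega
    have hrtn : r ≤ t * n := by
      have h1 := Nat.div_add_mod r t
      have h2 : r % t < t := Nat.mod_lt _ (by omega)
      have h3 : r ≤ t * q := by
        rw [hq]; nlinarith [Nat.div_add_mod r t]
      exact le_trans h3 (Nat.mul_le_mul_left t hnq)
    have hn0 : 0 < n := by omega
    have hcop : ∀ m, 0 < m → m < t → Nat.Coprime m n := by
      intro m hm0 hmt
      obtain ⟨cdiv, hc⟩ := Nat.dvd_factorial hm0 (by omega : m ≤ t - 1)
      have hform : n = 1 + m * (cdiv * (q / M) + cdiv) := by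
        rw [hn, hM, hc]; ring
      rw [hform]
      exact (Nat.coprime_add_mul_left_right m 1 _).mpr (Nat.coprime_one_right m)
    obtain ⟨k0, hcov0, hb0⟩ := ihb n
    refine ⟨n + k0, cov_restrict hrtn (cov_step hn0 hcop hcov0), ?_⟩
    -- numeric bound
    have hnR : (n : ℝ) ≤ (r : ℝ) / t + (M : ℝ) + 2 := by
      have h1 : (n : ℝ) ≤ (q : ℝ) + (M : ℝ) + 1 := by exact_mod_cast hnq2
      have h2 : (q : ℝ) ≤ (r : ℝ) / t + 1 := by
        rw [hq]; push_cast
        have := Nat.cast_div_le (m := r) (n := t) (α := ℝ)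
        linarith
      linarith
    have key : ((n : ℝ) + k0) ≤ (1 + aL) * ((r : ℝ) / t + (M : ℝ) + 2) + b := by
      have : (k0 : ℝ) ≤ aL * n + b := hb0
      have hmul : aL * (n : ℝ) ≤ aL * ((r : ℝ) / t + (M : ℝ) + 2) :=
        mul_le_mul_of_nonneg_left hnR haL0
      clear_value aL M q n
      have s2 : (n : ℝ) + ((k0 : ℝ)) ≤ ((r : ℝ) / t + (M : ℝ) + 2) + (aL * ((r : ℝ) / t + (M : ℝ) + 2) + b) := by
        linarith
      have hexp : (1 + aL) * ((r : ℝ) / t + (M : ℝ) + 2) + b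
          = ((r : ℝ) / t + (M : ℝ) + 2) + (aL * ((r : ℝ) / t + (M : ℝ) + 2) + b) := by ring
      rw [hexp]
      exact s2
    have hsplit : (1 + aL) * ((r : ℝ) / t + (M : ℝ) + 2) + b
        = ((1 + aL) / t) * r + ((1 + aL) * ((M : ℝ) + 2) + b) := by
      field_simp
      ring
    have hrec : (1 + aL) / (t : ℝ) = 1 / ((t : ℝ) - 1) + 2 / (t : ℝ) ^ (L + 1) := by
      rw [haL]
      rw [pow_succ]
      field_simp
      ring
    rw [← hrec, Nat.cast_add]
    calc (n : ℝ) + (k0 : ℝ) ≤ (1 + aL) * ((r : ℝ) / t + (M : ℝ) + 2) + b := key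
      _ = ((1 + aL) / t) * r + ((1 + aL) * ((M : ℝ) + 2) + b) := hsplit

lemma cov_graph {W : Type} [Fintype W] (H : SimpleGraph W) {t r k : ℕ}
    (hcard : t < Fintype.card W) (hconn : H.Connected)
    (hcv : Cov t r k) : fGraph H r ≤ k := by
  classical
  obtain ⟨D, hsize, hcov, hrep⟩ := hcv
  set S := D.toFinset with hS
  let V : Type := {q : Finset (Fin r) × Fin r // q.1 ∈ S ∧ q.2 ∈ q.1}
  let G : SimpleGraph V :=
    { Adj := fun u v => u.val.1 = v.val.1 ∧ u ≠ v,
      symm := ⟨fun u v h => ⟨h.1.symm, h.2.symm⟩⟩,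
      loopless := ⟨fun u h => h.2 rfl⟩ }
  set N := Fintype.card V with hN
  let e : V ≃ Fin N := Fintype.equivFin V
  let G' : SimpleGraph (Fin N) :=
    { Adj := fun x y => G.Adj (e.symm x) (e.symm y),
      symm := ⟨fun x y h => G.symm.symm _ _ h⟩,
      loopless := ⟨fun x h => G.loopless.irrefl _ h⟩ }
  apply Nat.sInf_le
  refine ⟨N, G', ?_, ?_⟩
  · -- H-free
    rintro ⟨f, hf⟩
    let F : W → V := fun w => e.symm (f w)
    have hFinj : Function.Injective F := fun a b hab => hf (e.symm.injective hab)
    have hadj : ∀ {a b : W}, H.Adj a b → G.Adj (F a) (F b) := fun h => f.map_adj h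
    have hW : Nonempty W := Fintype.card_pos_iff.mp (by omega)
    obtain ⟨w₀⟩ := hW
    have key : ∀ {a b : W}, H.Walk a b → (F a).val.1 = (F b).val.1 := by
      intro a b p
      induction p with
      | nil => rfl
      | cons h _ ih => exact (hadj h).1.trans ih
    let B₀ := (F w₀).val.1
    have hB₀D : B₀ ∈ D := Multiset.mem_toFinset.mp (F w₀).prop.1
    let g : W → {z // z ∈ B₀} := fun w =>
      ⟨(F w).val.2, by
        obtain ⟨p⟩ := hconn w₀ w
        show (F w).val.2 ∈ (F w₀).val.1
        exact (key p).symm ▸ (F w).prop.2⟩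
    have hginj : Function.Injective g := by
      intro w w' hww
      have h2 : (F w).val.2 = (F w').val.2 := congrArg Subtype.val hww
      have h1 : (F w).val.1 = (F w').val.1 := by
        obtain ⟨p⟩ := hconn w₀ w
        obtain ⟨p'⟩ := hconn w₀ w'
        exact (key p).symm.trans (key p')
      exact hFinj (Subtype.ext (Prod.ext h1 h2))
    have hle : Fintype.card W ≤ B₀.card := by
      have := Fintype.card_le_of_injective g hginj
      rwa [Fintype.card_coe] at this
    exact absurd (le_trans hle (hsize B₀ hB₀D)) (by omega)
  · -- IsRKGraph
    refine ⟨fun x => Finset.univ.filter (fun y : Fin N => (e.symm y).val.2 = x), ?_, ?_, ?_⟩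
    · intro v
      refine ⟨(e.symm v).val.2, by simp, ?_⟩
      intro x hx
      simp only [Finset.mem_filter, Finset.mem_univ, true_and] at hx
      exact hx.symm
    · intro x
      have hinj : Set.InjOn (fun y : Fin N => (e.symm y).val.1)
          ↑(Finset.univ.filter (fun y : Fin N => (e.symm y).val.2 = x)) := by
        intro y hy y' hy' hyy
        simp only [Finset.coe_filter, Set.mem_setOf_eq] at hy hy'
        have : e.symm y = e.symm y' := Subtype.ext (Prod.ext hyy (hy.2.trans hy'.2.symm))
        exact e.symm.injective this
      have hmaps : ∀ y ∈ Finset.univ.filter (fun y : Fin N => (e.symm y).val.2 = x),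
          (e.symm y).val.1 ∈ S.filter (fun B => x ∈ B) := by
        intro y hy
        simp only [Finset.mem_filter, Finset.mem_univ, true_and] at hy
        refine Finset.mem_filter.mpr ⟨(e.symm y).prop.1, ?_⟩
        exact hy ▸ (e.symm y).prop.2
      refine le_trans (Finset.card_le_card_of_injOn _ hmaps hinj) ?_
      have h1 : (S.filter (fun B => x ∈ B)).card = Multiset.countP (fun B => x ∈ B) S.val := by
        rw [Finset.card_def, Finset.filter_val, Multiset.countP_eq_card_filter]
      rw [h1, hS, Multiset.toFinset_val]
      exact le_trans (Multiset.countP_le_of_le _ (Multiset.dedup_le D)) (hrep x)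
    · intro i j hij
      obtain ⟨B, hB, hiB, hjB⟩ := hcov i j hij
      have hBS : B ∈ S := Multiset.mem_toFinset.mpr hB
      let u : V := ⟨(B, i), hBS, hiB⟩
      let w : V := ⟨(B, j), hBS, hjB⟩
      refine ⟨e u, ?_, e w, ?_, ?_⟩
      · simp [u]
      · simp [w]
      · show G.Adj (e.symm (e u)) (e.symm (e w))
        rw [e.symm_apply_apply, e.symm_apply_apply]
        refine ⟨rfl, ?_⟩
        intro hc
        have : i = j := by
          have := congrArg (fun z : V => z.val.2) hc
          exact this
        exact hij this


/-- If `t ≥ 2` and `H` is a connected graph with more than `t` vertices, then for every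
`ε > 0` and all sufficiently large `r`, `f(r,H) ≤ (1+ε)·(r−1)/(t−1)`. -/
theorem stmt6 {W : Type} [Fintype W] (H : SimpleGraph W) (t : ℕ) (ht : 2 ≤ t)
    (hconn : H.Connected) (hcard : t < Fintype.card W) (ε : ℝ) (hε : 0 < ε) :
    ∃ r₀ : ℕ, ∀ r : ℕ, r₀ ≤ r →
      (fGraph H r : ℝ) ≤ (1 + ε) * (((r : ℝ) - 1) / ((t : ℝ) - 1)) := by
  have htR : (2 : ℝ) ≤ (t : ℝ) := by exact_mod_cast ht
  set T : ℝ := (t : ℝ) - 1 with hT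
  have hT0 : 0 < T := by rw [hT]; linarith
  obtain ⟨L, hL⟩ := pow_unbounded_of_one_lt (R := ℝ) (4 * T / ε) (by linarith : (1 : ℝ) < (t : ℝ))
  have htL0 : (0 : ℝ) < (t : ℝ) ^ L := by positivity
  have h2L : 2 / (t : ℝ) ^ L ≤ ε / (2 * T) := by
    rw [div_le_div_iff₀ htL0 (by positivity)]
    have h1 : ε * (4 * T / ε) < ε * (t : ℝ) ^ L := by
      exact mul_lt_mul_of_pos_left hL hε
    have h2 : ε * (4 * T / ε) = 4 * T := by field_simp
    linarith
  obtain ⟨b, hb, hchain⟩ := cov_chain ht L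
  obtain ⟨R, hR⟩ := exists_nat_ge (2 * (b * T + 1 + ε) / ε)
  refine ⟨R, fun r hr => ?_⟩
  obtain ⟨k, hk, hkb⟩ := hchain r
  have hf : fGraph H r ≤ k := cov_graph H hcard hconn hk
  have hfr : (fGraph H r : ℝ) ≤ (k : ℝ) := by exact_mod_cast hf
  have hrC : 2 * (b * T + 1 + ε) / ε ≤ (r : ℝ) := le_trans hR (by exact_mod_cast hr)
  have hrC2 : 2 * (b * T + 1 + ε) ≤ ε * (r : ℝ) := by
    rw [div_le_iff₀ hε] at hrC
    linarith
  have hr0 : (0 : ℝ) ≤ (r : ℝ) := Nat.cast_nonneg r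
  have key : (r : ℝ) + ε * (r : ℝ) / 2 + b * T ≤ (1 + ε) * ((r : ℝ) - 1) := by nlinarith
  have hmul : (2 / (t : ℝ) ^ L) * (r : ℝ) ≤ (ε / (2 * T)) * (r : ℝ) :=
    mul_le_mul_of_nonneg_right h2L hr0
  calc (fGraph H r : ℝ) ≤ (k : ℝ) := hfr
    _ ≤ (1 / T + 2 / (t : ℝ) ^ L) * (r : ℝ) + b := hkb
    _ = (r : ℝ) / T + (2 / (t : ℝ) ^ L) * (r : ℝ) + b := by ring
    _ ≤ (r : ℝ) / T + (ε / (2 * T)) * (r : ℝ) + b := by linarith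
    _ = ((r : ℝ) + ε * (r : ℝ) / 2 + b * T) / T := by field_simp
    _ ≤ ((1 + ε) * ((r : ℝ) - 1)) / T := by
        gcongr
    _ = (1 + ε) * (((r : ℝ) - 1) / T) := by ring
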